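/- With the action (B,r)·F_{U,ρ} = r·det(B)·F_{BU,ρ}, the elements F_{e₁,ρ} and F_{e₁,ρ̃} with ρ, ρ̃ ≥ 0 and ρ ≠ ρ̃ lie in different orbits of O(2) × ℝ*. -/

import Mathlib

/-- The Lorentz force F_{U,ρ} on h₃, with U = βe₁ + αe₂ encoded as
    `U = ![β, α]`, given by the matrix [[0,-ρ,-β],[ρ,0,-α],[β,α,0]]. -/
def Fm (U : Fin 2 → ℝ) (ρ : ℝ) : Matrix (Fin 3) (Fin 3) ℝ :=
  ![![0, -ρ, -(U 0)], ![ρ, 0, -(U 1)], ![U 0, U 1, 0]]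

/- F_{e₁,ρ} and F_{e₁,ρ̃} with ρ, ρ̃ ≥ 0, ρ ≠ ρ̃, lie in different orbits of
   the action (B,r)·F_{U,ρ} = r·det(B)·F_{BU,ρ} of O(2) × ℝ*. -/
theorem stmt_7 (ρ ρ' : ℝ) (hρ : 0 ≤ ρ) (hρ' : 0 ≤ ρ') (hne : ρ ≠ ρ') :
    ¬ ∃ (B : Matrix (Fin 2) (Fin 2) ℝ) (r : ℝ),
        B.transpose * B = 1 ∧ r ≠ 0 ∧
        (r * B.det) • Fm (B.mulVec ![1, 0]) ρ = Fm ![1, 0] ρ' := by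
  rintro ⟨B, r, hB, hr, hF⟩
  set c := r * B.det with hc
  have h20 := congrFun (congrFun hF 2) 0
  have h21 := congrFun (congrFun hF 2) 1
  have h01 := congrFun (congrFun hF 0) 1
  simp only [Matrix.smul_apply] at h20 h21 h01
  simp [Fm, Matrix.smul_apply, Matrix.mulVec, dotProduct,
    Fin.sum_univ_two, Matrix.vecHead, Matrix.vecTail] at h20 h21 h01
  have horth := congrFun (congrFun hB 0) 0
  simp [Matrix.mul_apply, Matrix.transpose_apply, Fin.sum_univ_two,
    Matrix.one_apply] at horth
  -- h20 : c * B 0 0 = 1, h21 : c * B 1 0 = 0, h01 : c * ρ = ρ'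
  have hB10 : B 1 0 = 0 := by
    rcases h21 with h | h
    · rw [h] at h20; simp at h20
    · exact h
  have hB00 : B 0 0 * B 0 0 = 1 := by rw [hB10] at horth; linarith
  have hc2 : c ^ 2 = 1 := by
    linear_combination (c * B 0 0 + 1) * h20 - c ^ 2 * hB00
  have hsq : ρ' ^ 2 = ρ ^ 2 := by nlinarith [h01, hc2]
  exact hne (le_antisymm (by nlinarith) (by nlinarith))
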